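/- Let a ≥ 0, b > 0, χ > 0, κ > 0 and T ∈ (0, ∞]. Suppose ū, w : [0, T) → (0, ∞) are differentiable and satisfy, for all t ∈ [0, T), ū′(t) = χ ū(t)((ū(t))^κ − (w(t))^κ) + ū(t)(a − b(ū(t))^κ) and w′(t) = χ w(t)((w(t))^κ − (ū(t))^κ) + w(t)(a − b(w(t))^κ), and suppose w(0) ≤ (a/b)^{1/κ} ≤ ū(0). Then w(t) ≤ (a/b)^{1/κ} ≤ ū(t) for all t ∈ [0, T). -/

import Mathlib

open scoped ENNReal
open Set Real Filter Topology

lemma posPartSq_hasDerivAt (r : ℝ) :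
    HasDerivAt (fun z : ℝ => max z 0 ^ 2) (2 * max r 0) r := by
  rcases lt_trichotomy r 0 with h | h | h
  · have heq : (fun z : ℝ => max z 0 ^ 2) =ᶠ[nhds r] fun _ => (0 : ℝ) := by
      filter_upwards [Iio_mem_nhds h] with z hz
      simp [max_eq_right (le_of_lt (mem_Iio.mp hz))]
    have h0 : HasDerivAt (fun _ : ℝ => (0 : ℝ)) 0 r := hasDerivAt_const r 0
    have := h0.congr_of_eventuallyEq heq
    simpa [max_eq_right h.le] using this
  · subst h
    rw [hasDerivAt_iff_tendsto_slope]
    have heq : slope (fun z : ℝ => max z 0 ^ 2) 0 =ᶠ[𝓝[≠] (0:ℝ)] fun z => max z 0 := by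
      filter_upwards [self_mem_nhdsWithin] with z hz
      have hz' : z ≠ 0 := hz
      rcases le_or_gt z 0 with hzle | hzlt
      · simp [slope_def_field, max_eq_right hzle]
      · rw [slope_def_field, max_eq_left hzlt.le, max_eq_left le_rfl]
        field_simp
        ring
    rw [tendsto_congr' heq]
    have : Filter.Tendsto (fun z : ℝ => max z 0) (nhds 0) (nhds (max 0 0)) :=
      (continuous_id.max continuous_const).tendsto 0
    simpa using this.mono_left nhdsWithin_le_nhds
  · have heq : (fun z : ℝ => max z 0 ^ 2) =ᶠ[nhds r] fun z => z ^ 2 := by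
      filter_upwards [Ioi_mem_nhds h] with z hz
      simp [max_eq_left (le_of_lt (mem_Iio.mp hz))]
    have h0 : HasDerivAt (fun z : ℝ => z ^ 2) (2 * r) r := by
      simpa using (hasDerivAt_pow 2 r)
    have := h0.congr_of_eventuallyEq heq
    simpa [max_eq_left h.le] using this

lemma boundAux1 (kk cc bb Uv Vv mm p q : ℝ) (hk : 0 < kk) (hc : 0 < cc) (hbb : 0 < bb)
    (hU0 : 0 < Uv) (hp0 : 0 ≤ p) (hq0 : 0 ≤ q)
    (hpmv : p * (mm - Vv) ≤ p * q) (hpe : p * (Uv - mm) = p ^ 2) :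
    2 * p * (kk * Uv * (cc * (Uv - Vv) - bb * (Uv - mm))) ≤ 3 * kk * cc * Uv * (p ^ 2 + q ^ 2) := by
  have ha' : (2 * kk * cc * Uv) * (p * (Uv - mm)) = (2 * kk * cc * Uv) * p ^ 2 := by rw [hpe]
  have hb' : (2 * kk * bb * Uv) * (p * (Uv - mm)) = (2 * kk * bb * Uv) * p ^ 2 := by rw [hpe]
  have hc' : (2 * kk * cc * Uv) * (p * (mm - Vv)) ≤ (2 * kk * cc * Uv) * (p * q) :=
    mul_le_mul_of_nonneg_left hpmv (by positivity)
  have hd' : 0 ≤ (kk * cc * Uv) * (p - q) ^ 2 := by positivity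
  have he' : 0 ≤ (2 * kk * bb * Uv) * p ^ 2 := by positivity
  have hf' : 0 ≤ (kk * cc * Uv) * q ^ 2 := by positivity
  nlinarith only [ha', hb', hc', hd', he', hf']

lemma boundAux2 (kk cc bb Uv Vv mm p q : ℝ) (hk : 0 < kk) (hc : 0 < cc) (hbb : 0 < bb)
    (hV0 : 0 < Vv) (hp0 : 0 ≤ p) (hq0 : 0 ≤ q)
    (hqum : q * (Uv - mm) ≤ q * p) (hqe : q * (mm - Vv) = q ^ 2) :
    -(2 * q * (kk * Vv * (cc * (Vv - Uv) - bb * (Vv - mm)))) ≤ 3 * kk * cc * Vv * (p ^ 2 + q ^ 2) := by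
  have ha' : (2 * kk * cc * Vv) * (q * (mm - Vv)) = (2 * kk * cc * Vv) * q ^ 2 := by rw [hqe]
  have hb' : (2 * kk * bb * Vv) * (q * (mm - Vv)) = (2 * kk * bb * Vv) * q ^ 2 := by rw [hqe]
  have hc' : (2 * kk * cc * Vv) * (q * (Uv - mm)) ≤ (2 * kk * cc * Vv) * (q * p) :=
    mul_le_mul_of_nonneg_left hqum (by positivity)
  have hd' : 0 ≤ (kk * cc * Vv) * (p - q) ^ 2 := by positivity
  have he' : 0 ≤ (2 * kk * bb * Vv) * q ^ 2 := by positivity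
  have hf' : 0 ≤ (kk * cc * Vv) * p ^ 2 := by positivity
  nlinarith only [ha', hb', hc', hd', he', hf']

set_option maxHeartbeats 1000000 in
/-- Steps 1–2 of the proof of Theorem 6.1: for the comparison ODE system on
[0, T) (with T ∈ (0, ∞]) associated with f(u) = u(a − bu^κ), if
w(0) ≤ (a/b)^{1/κ} ≤ ū(0) then w(t) ≤ (a/b)^{1/κ} ≤ ū(t) for all t ∈ [0, T). -/
theorem stmt9 (a b χ κ : ℝ) (ha : 0 ≤ a) (hb : 0 < b) (hχ : 0 < χ) (hκ : 0 < κ)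
    (T : ℝ≥0∞) (hT : 0 < T)
    (ubar w : ℝ → ℝ)
    (hub : ∀ t : ℝ, 0 ≤ t → ENNReal.ofReal t < T → 0 < ubar t)
    (hwb : ∀ t : ℝ, 0 ≤ t → ENNReal.ofReal t < T → 0 < w t)
    (hud : ∀ t : ℝ, 0 ≤ t → ENNReal.ofReal t < T →
      HasDerivWithinAt ubar
        (χ * ubar t * (ubar t ^ κ - w t ^ κ) + ubar t * (a - b * ubar t ^ κ))
        {s : ℝ | 0 ≤ s ∧ ENNReal.ofReal s < T} t)
    (hwd : ∀ t : ℝ, 0 ≤ t → ENNReal.ofReal t < T →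
      HasDerivWithinAt w
        (χ * w t * (w t ^ κ - ubar t ^ κ) + w t * (a - b * w t ^ κ))
        {s : ℝ | 0 ≤ s ∧ ENNReal.ofReal s < T} t)
    (hw0 : w 0 ≤ (a / b) ^ (1 / κ)) (hu0 : (a / b) ^ (1 / κ) ≤ ubar 0) :
    ∀ t : ℝ, 0 ≤ t → ENNReal.ofReal t < T →
      w t ≤ (a / b) ^ (1 / κ) ∧ (a / b) ^ (1 / κ) ≤ ubar t := by
  intro t ht0 htT
  set m : ℝ := a / b with hm
  have hm0 : 0 ≤ m := div_nonneg ha hb.le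
  have hba : a = b * m := by rw [hm, mul_div_assoc', mul_div_cancel_left₀ a hb.ne']
  have hcκ : ((a / b) ^ (1 / κ)) ^ κ = m := by
    rw [← hm, ← Real.rpow_mul hm0, one_div, inv_mul_cancel₀ hκ.ne', Real.rpow_one]
  have hsub : Icc (0:ℝ) t ⊆ {s : ℝ | 0 ≤ s ∧ ENNReal.ofReal s < T} := fun s hs =>
    ⟨hs.1, lt_of_le_of_lt (ENNReal.ofReal_le_ofReal hs.2) htT⟩
  set U : ℝ → ℝ := fun s => w s ^ κ with hU
  set V : ℝ → ℝ := fun s => ubar s ^ κ with hV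
  set U' : ℝ → ℝ := fun s => κ * U s * (χ * (U s - V s) - b * (U s - m)) with hU'
  set V' : ℝ → ℝ := fun s => κ * V s * (χ * (V s - U s) - b * (V s - m)) with hV'
  set G : ℝ → ℝ := fun s => max (U s - m) 0 ^ 2 + max (m - V s) 0 ^ 2 with hG
  set G' : ℝ → ℝ := fun s =>
    2 * max (U s - m) 0 * U' s - 2 * max (m - V s) 0 * V' s with hG'
  -- positivity on the interval
  have hwpos : ∀ s ∈ Icc (0:ℝ) t, 0 < w s := fun s hs => hwb s (hsub hs).1 (hsub hs).2
  have hupos : ∀ s ∈ Icc (0:ℝ) t, 0 < ubar s := fun s hs => hub s (hsub hs).1 (hsub hs).2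
  have hUpos : ∀ s ∈ Icc (0:ℝ) t, 0 < U s := fun s hs => Real.rpow_pos_of_pos (hwpos s hs) κ
  have hVpos : ∀ s ∈ Icc (0:ℝ) t, 0 < V s := fun s hs => Real.rpow_pos_of_pos (hupos s hs) κ
  -- derivative of U
  have hUd : ∀ s ∈ Icc (0:ℝ) t, HasDerivWithinAt U (U' s) (Icc (0:ℝ) t) s := by
    intro s hs
    have hw' : 0 < w s := hwpos s hs
    have h1 := ((hwd s (hsub hs).1 (hsub hs).2).mono hsub).rpow_const (p := κ)
      (Or.inl hw'.ne')
    convert h1 using 1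
    have key : w s ^ (κ - 1) * w s = w s ^ κ := by
      rw [← Real.rpow_add_one hw'.ne', sub_add_cancel]
    have hrfl : U' s = κ * w s ^ κ * (χ * (w s ^ κ - ubar s ^ κ) - b * (w s ^ κ - m)) := rfl
    rw [hrfl, ← key, hba]; ring
  have hVd : ∀ s ∈ Icc (0:ℝ) t, HasDerivWithinAt V (V' s) (Icc (0:ℝ) t) s := by
    intro s hs
    have hu' : 0 < ubar s := hupos s hs
    have h1 := ((hud s (hsub hs).1 (hsub hs).2).mono hsub).rpow_const (p := κ)
      (Or.inl hu'.ne')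
    convert h1 using 1
    have key : ubar s ^ (κ - 1) * ubar s = ubar s ^ κ := by
      rw [← Real.rpow_add_one hu'.ne', sub_add_cancel]
    have hrfl : V' s = κ * ubar s ^ κ * (χ * (ubar s ^ κ - w s ^ κ) - b * (ubar s ^ κ - m)) := rfl
    rw [hrfl, ← key, hba]; ring
  -- derivative of G
  have hGd : ∀ s ∈ Icc (0:ℝ) t, HasDerivWithinAt G (G' s) (Icc (0:ℝ) t) s := by
    intro s hs
    have h1 : HasDerivWithinAt (fun s => max (U s - m) 0 ^ 2)
        (2 * max (U s - m) 0 * U' s) (Icc (0:ℝ) t) s := by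
      have := (posPartSq_hasDerivAt (U s - m)).comp_hasDerivWithinAt s ((hUd s hs).sub_const m)
      exact this
    have h2 : HasDerivWithinAt (fun s => max (m - V s) 0 ^ 2)
        (2 * max (m - V s) 0 * (0 - V' s)) (Icc (0:ℝ) t) s := by
      have := (posPartSq_hasDerivAt (m - V s)).comp_hasDerivWithinAt s
        ((hasDerivWithinAt_const s _ m).sub (hVd s hs))
      exact this
    have h3 := h1.add h2
    refine h3.congr_deriv ?_
    have hrfl : G' s = 2 * max (U s - m) 0 * U' s - 2 * max (m - V s) 0 * V' s := rfl
    rw [hrfl]; ring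
  have hGc : ContinuousOn G (Icc (0:ℝ) t) := fun s hs => (hGd s hs).continuousWithinAt
  -- bound on U + V
  obtain ⟨C, hC⟩ : ∃ C : ℝ, ∀ s ∈ Icc (0:ℝ) t, U s + V s ≤ C := by
    obtain ⟨C, hC⟩ := isCompact_Icc.exists_bound_of_continuousOn
      (fun s hs => ((hUd s hs).continuousWithinAt.add (hVd s hs).continuousWithinAt))
    exact ⟨C, fun s hs => (le_abs_self _).trans (by simpa using hC s hs)⟩
  set K : ℝ := 3 * κ * χ * C with hK
  -- slope condition
  have hslope : ∀ x ∈ Ico (0:ℝ) t, ∀ r, G' x < r →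
      ∃ᶠ z in 𝓝[>] x, (z - x)⁻¹ * (G z - G x) < r := by
    intro x hx r hr
    have hIci : HasDerivWithinAt G (G' x) (Ici x) x :=
      (hGd x (Ico_subset_Icc_self hx)).mono_of_mem_nhdsWithin (Icc_mem_nhdsGE_of_mem hx)
    have := hIci.liminf_right_slope_le hr
    simpa [slope_def_field, div_eq_inv_mul] using this
  -- initial condition
  have h0mem : (0:ℝ) ∈ Icc (0:ℝ) t := left_mem_Icc.mpr ht0
  have hG0 : G 0 ≤ 0 := by
    have hw0κ : U 0 ≤ m := by
      calc U 0 = w 0 ^ κ := rfl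
        _ ≤ ((a / b) ^ (1 / κ)) ^ κ :=
            Real.rpow_le_rpow (hwpos 0 h0mem).le hw0 hκ.le
        _ = m := hcκ
    have hu0κ : m ≤ V 0 := by
      calc m = ((a / b) ^ (1 / κ)) ^ κ := hcκ.symm
        _ ≤ ubar 0 ^ κ := Real.rpow_le_rpow (Real.rpow_nonneg hm0 _) hu0 hκ.le
        _ = V 0 := rfl
    have hrfl : G 0 = max (U 0 - m) 0 ^ 2 + max (m - V 0) 0 ^ 2 := rfl
    have : G 0 = 0 := by
      rw [hrfl, max_eq_right (by linarith), max_eq_right (by linarith)]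
      ring
    linarith
  -- Gronwall bound
  have hbound : ∀ x ∈ Ico (0:ℝ) t, G' x ≤ K * G x + 0 := by
    intro s hs
    have hs' : s ∈ Icc (0:ℝ) t := Ico_subset_Icc_self hs
    set p : ℝ := max (U s - m) 0 with hp
    set q : ℝ := max (m - V s) 0 with hq
    have hp0 : 0 ≤ p := le_max_right _ _
    have hq0 : 0 ≤ q := le_max_right _ _
    have hpu : U s - m ≤ p := le_max_left _ _
    have hqv : m - V s ≤ q := le_max_left _ _
    have hpe : p * (U s - m) = p ^ 2 := by
      rcases le_total (U s - m) 0 with h | h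
      · rw [hp, max_eq_right h]; ring
      · rw [hp, max_eq_left h]; ring
    have hqe : q * (m - V s) = q ^ 2 := by
      rcases le_total (m - V s) 0 with h | h
      · rw [hq, max_eq_right h]; ring
      · rw [hq, max_eq_left h]; ring
    have hU0 : 0 < U s := hUpos s hs'
    have hV0 : 0 < V s := hVpos s hs'
    have hUV : U s + V s ≤ C := hC s hs'
    have hpmv : p * (m - V s) ≤ p * q := mul_le_mul_of_nonneg_left hqv hp0
    have hqum : q * (U s - m) ≤ q * p := mul_le_mul_of_nonneg_left hpu hq0
    have hUrfl : U' s = κ * U s * (χ * (U s - V s) - b * (U s - m)) := rfl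
    have hVrfl : V' s = κ * V s * (χ * (V s - U s) - b * (V s - m)) := rfl
    have h1 : 2 * p * U' s ≤ 3 * κ * χ * U s * (p ^ 2 + q ^ 2) := by
      rw [hUrfl]
      exact boundAux1 κ χ b (U s) (V s) m p q hκ hχ hb hU0 hp0 hq0 hpmv hpe
    have h2 : -(2 * q * V' s) ≤ 3 * κ * χ * V s * (p ^ 2 + q ^ 2) := by
      rw [hVrfl]
      exact boundAux2 κ χ b (U s) (V s) m p q hκ hχ hb hV0 hp0 hq0 hqum hqe
    have h3 : 3 * κ * χ * (U s + V s) * (p ^ 2 + q ^ 2) ≤ K * (p ^ 2 + q ^ 2) := by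
      rw [hK]
      have h4 : (3 * κ * χ) * (U s + V s) ≤ (3 * κ * χ) * C :=
        mul_le_mul_of_nonneg_left hUV (by positivity)
      have h5 : 0 ≤ p ^ 2 + q ^ 2 := by positivity
      nlinarith [mul_le_mul_of_nonneg_right h4 h5]
    have hGval : G s = p ^ 2 + q ^ 2 := rfl
    have hGval' : G' s = 2 * p * U' s - 2 * q * V' s := rfl
    rw [hGval, hGval']
    linarith only [h1, h2, h3]
  have hgr := le_gronwallBound_of_liminf_deriv_right_le hGc hslope hG0 hbound t
    (right_mem_Icc.mpr ht0)
  rw [gronwallBound_ε0_δ0] at hgr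
  -- conclude G t = 0
  have htmem : t ∈ Icc (0:ℝ) t := right_mem_Icc.mpr ht0
  have hGt : G t = 0 := le_antisymm hgr (by positivity)
  have hGt' : max (U t - m) 0 ^ 2 + max (m - V t) 0 ^ 2 = 0 := hGt
  have hpt : U t - m ≤ 0 := by
    have h1 : max (U t - m) 0 = 0 := by
      nlinarith only [hGt', sq_nonneg (max (U t - m) 0), sq_nonneg (max (m - V t) 0),
        le_max_right (U t - m) (0:ℝ), le_max_right (m - V t) (0:ℝ)]
    calc U t - m ≤ max (U t - m) 0 := le_max_left _ _
      _ = 0 := h1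
  have hqt : m - V t ≤ 0 := by
    have h1 : max (m - V t) 0 = 0 := by
      nlinarith only [hGt', sq_nonneg (max (U t - m) 0), sq_nonneg (max (m - V t) 0),
        le_max_right (U t - m) (0:ℝ), le_max_right (m - V t) (0:ℝ)]
    calc m - V t ≤ max (m - V t) 0 := le_max_left _ _
      _ = 0 := h1
  have hUt : w t ^ κ ≤ m := by
    have : U t = w t ^ κ := rfl
    linarith [hpt, this.symm.le]
  have hVt : m ≤ ubar t ^ κ := by
    have : V t = ubar t ^ κ := rfl
    linarith [hqt, this.symm.le]
  constructor
  · have hwt : 0 < w t := hwpos t htmem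
    have heq : w t = (w t ^ κ) ^ (1 / κ) := by
      rw [← Real.rpow_mul hwt.le, mul_one_div, div_self hκ.ne', Real.rpow_one]
    calc w t = (w t ^ κ) ^ (1 / κ) := heq
      _ ≤ m ^ (1 / κ) := Real.rpow_le_rpow (Real.rpow_nonneg hwt.le _) hUt (by positivity)
  · have hut : 0 < ubar t := hupos t htmem
    have heq : ubar t = (ubar t ^ κ) ^ (1 / κ) := by
      rw [← Real.rpow_mul hut.le, mul_one_div, div_self hκ.ne', Real.rpow_one]
    calc m ^ (1 / κ) ≤ (ubar t ^ κ) ^ (1 / κ) :=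
        Real.rpow_le_rpow hm0 hVt (by positivity)
      _ = ubar t := heq.symm
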